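/- Let H be a d×d Hermitian Hamiltonian with strictly increasing eigenvalues E_1 < E_2 < … < E_d, and let ρ_1, ρ_2 be quantum states on the same d-dimensional Hilbert space. If the eigenvalue vector of ρ_2 is majorized by the eigenvalue vector of ρ_1, i.e. λ(ρ_2) ≺ λ(ρ_1), then the passive energies satisfy E_pass(ρ_1) ≤ E_pass(ρ_2), where E_pass(ρ) := min over unitaries U of Tr(H U ρ U†). -/

import Mathlib

open Matrix ComplexOrder

/-- Passive energy of a state `σ` w.r.t. the Hamiltonian `H`:
the infimum over all unitaries `U` of `Tr (H U σ U†)`. -/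
noncomputable def Epass {d : ℕ} (H σ : Matrix (Fin d) (Fin d) ℂ) : ℝ :=
  ⨅ U : Matrix.unitaryGroup (Fin d) ℂ,
    ((H * ((U : Matrix (Fin d) (Fin d) ℂ) * σ * ((U : Matrix (Fin d) (Fin d) ℂ))ᴴ)).trace).re

/-- Coarse-grained state `ρ_cg^M = ∑ i, Tr(ρ M i) • M i / Tr(M i)`. -/
noncomputable def cgState {d n : ℕ} (ρ : Matrix (Fin d) (Fin d) ℂ)
    (M : Fin n → Matrix (Fin d) (Fin d) ℂ) : Matrix (Fin d) (Fin d) ℂ :=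
  ∑ i, (((ρ * M i).trace) / ((M i).trace)) • M i

/-- Observational ergotropy `R(ρ, M) = Tr(H ρ) - Epass(ρ_cg^M)`. -/
noncomputable def obsErg {d n : ℕ} (ρ H : Matrix (Fin d) (Fin d) ℂ)
    (M : Fin n → Matrix (Fin d) (Fin d) ℂ) : ℝ :=
  ((H * ρ).trace).re - Epass H (cgState ρ M)

/-- A fine-grained measurement: a family of rank-one mutually orthogonal
(Hermitian) projectors summing to the identity. -/
def FineGrained {d : ℕ} (P : Fin d → Matrix (Fin d) (Fin d) ℂ) : Prop :=
  (∀ i, (P i).IsHermitian) ∧ (∀ i j, P i * P j = if i = j then P i else 0) ∧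
    (∑ i, P i = 1) ∧ (∀ i, (P i).rank = 1)

/-- A column-stochastic matrix: nonnegative entries, every column sums to 1. -/
def ColStochastic {n d : ℕ} (D : Matrix (Fin n) (Fin d) ℝ) : Prop :=
  (∀ i j, 0 ≤ D i j) ∧ ∀ j, ∑ i, D i j = 1

/-- A doubly stochastic matrix: nonnegative entries, all row and column sums are 1. -/
def DoublyStochastic {d : ℕ} (B : Matrix (Fin d) (Fin d) ℝ) : Prop :=
  (∀ i j, 0 ≤ B i j) ∧ (∀ i, ∑ j, B i j = 1) ∧ (∀ j, ∑ i, B i j = 1)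

/-- The entries of `x` rearranged in non-increasing order. -/
noncomputable def descSort {d : ℕ} (x : Fin d → ℝ) : Fin d → ℝ :=
  fun i => x (Tuple.sort x i.rev)

/-- `Majorized x y` (`x ≺ y`): for every `k` the sum of the `k` largest entries
of `x` is at most that of `y`, with equal total sums. -/
def Majorized {d : ℕ} (x y : Fin d → ℝ) : Prop :=
  (∀ k : ℕ, (∑ i : Fin d, if (i : ℕ) < k then descSort x i else 0) ≤
      ∑ i : Fin d, if (i : ℕ) < k then descSort y i else 0) ∧
    (∑ i, x i = ∑ i, y i)

/-- The rank-one projector `|v⟩⟨v|`. -/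
noncomputable def projVec {d : ℕ} (v : Fin d → ℂ) : Matrix (Fin d) (Fin d) ℂ :=
  Matrix.vecMulVec v (star v)

/-- `v` is an orthonormal family: `⟨v i, v j⟩ = δ_{ij}`. -/
def IsONB {d : ℕ} (v : Fin d → (Fin d → ℂ)) : Prop :=
  ∀ i j, star (v i) ⬝ᵥ v j = if i = j then 1 else 0

/-- The dephasing `Δ_ρ = ∑ j ⟨E_j|ρ|E_j⟩ |E_j⟩⟨E_j|` of `ρ` in the basis `v`. -/
noncomputable def dephase {d : ℕ} (ρ : Matrix (Fin d) (Fin d) ℂ)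
    (v : Fin d → (Fin d → ℂ)) : Matrix (Fin d) (Fin d) ℂ :=
  ∑ j, (star (v j) ⬝ᵥ (ρ *ᵥ v j)) • projVec (v j)

/-- Incoherent ergotropy `R_incoherent(ρ) = Tr(H Δ_ρ) - Epass(Δ_ρ)`. -/
noncomputable def Rincoherent {d : ℕ} (ρ H : Matrix (Fin d) (Fin d) ℂ)
    (v : Fin d → (Fin d → ℂ)) : ℝ :=
  ((H * dephase ρ v).trace).re - Epass H (dephase ρ v)

/-! ### Auxiliary lemmas -/

section Aux
open Finset

private lemma sum_descSort {d : ℕ} (x : Fin d → ℝ) : ∑ i, descSort x i = ∑ i, x i := by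
  have h : ∀ i, descSort x i = x ((Fin.revPerm.trans (Tuple.sort x)) i) := fun i => rfl
  simp_rw [h]
  exact Equiv.sum_comp _ x

private lemma descSort_antitone {d : ℕ} (x : Fin d → ℝ) : Antitone (descSort x) := by
  intro i j hij
  exact Tuple.monotone_sort x (Fin.rev_le_rev.mpr hij)

private lemma abel_mul (n : ℕ) (f g : ℕ → ℝ) :
    ∑ i ∈ range n, f i * g i =
      f (n - 1) * (∑ j ∈ range n, g j)
        - ∑ i ∈ range (n - 1), (f (i + 1) - f i) * ∑ j ∈ range (i + 1), g j := by
  simpa [smul_eq_mul] using Finset.sum_range_by_parts f g n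

private lemma finIfSum_eq {d : ℕ} (w : Fin d → ℝ) (m : ℕ) (hm : m ≤ d) :
    ∑ i : Fin d, (if (i : ℕ) < m then w i else 0)
      = ∑ j ∈ range m, (if h : j < d then w ⟨j, h⟩ else 0) := by
  calc ∑ i : Fin d, (if (i : ℕ) < m then w i else 0)
      = ∑ i : Fin d, (fun j => if _ : j < m then (if h2 : j < d then w ⟨j, h2⟩ else 0) else 0) (i : ℕ) := by
        refine Finset.sum_congr rfl fun i _ => ?_
        by_cases h : (i : ℕ) < m <;> simp [h]
    _ = ∑ j ∈ range d, (if _ : j < m then (if h2 : j < d then w ⟨j, h2⟩ else 0) else 0) :=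
        Fin.sum_univ_eq_sum_range (fun j => if _ : j < m then (if h2 : j < d then w ⟨j, h2⟩ else 0) else 0) d
    _ = ∑ j ∈ range m, (if h : j < d then w ⟨j, h⟩ else 0) := by
        rw [← Finset.sum_subset (Finset.range_subset_range.mpr hm)]
        · exact Finset.sum_congr rfl fun j hj => by
            simp only [Finset.mem_range] at hj; simp [hj]
        · intro x _ hx
          simp only [Finset.mem_range] at hx; simp [hx]

private lemma sum_w_eq {d : ℕ} (w : Fin d → ℝ) :
    ∑ j ∈ range d, (if h : j < d then w ⟨j, h⟩ else 0) = ∑ i, w i := by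
  rw [← finIfSum_eq w d le_rfl]
  exact Finset.sum_congr rfl fun i _ => by simp [i.isLt]

/-- Abel comparison: if partial "top" sums of `p` dominate those of `q` and totals agree,
then the `E`-weighted sum of `q` is at most that of `p`, for monotone `E`. -/
private lemma abel_compare {d : ℕ} (hd : 0 < d) (E : Fin d → ℝ) (hE : Monotone E)
    (p q : Fin d → ℝ)
    (hpartial : ∀ m, 0 < m → m < d →
      (∑ i : Fin d, if (i : ℕ) < m then p i else 0) ≤
        ∑ i : Fin d, if (i : ℕ) < m then q i else 0)
    (htot : ∑ i, p i = ∑ i, q i) :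
    ∑ i, E i * q i ≤ ∑ i, E i * p i := by
  set Ee : ℕ → ℝ := fun i => E ⟨min i (d - 1), by omega⟩ with hEe
  have key : ∀ w : Fin d → ℝ, ∑ i, E i * w i
      = Ee (d - 1) * (∑ i, w i)
        - ∑ i ∈ range (d - 1), (Ee (i + 1) - Ee i) *
            (∑ k : Fin d, if (k : ℕ) < i + 1 then w k else 0) := by
    intro w
    set W : ℕ → ℝ := fun j => if h : j < d then w ⟨j, h⟩ else 0 with hW
    have h0 : ∑ i, E i * w i = ∑ i ∈ range d, Ee i * W i := by
      rw [← Fin.sum_univ_eq_sum_range (fun j => Ee j * W j) d]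
      refine Finset.sum_congr rfl fun i _ => ?_
      have h1 : Ee (i : ℕ) = E i := by
        simp only [hEe]; congr 1; ext; simp; omega
      have h2 : W (i : ℕ) = w i := by simp [hW, i.isLt]
      rw [h1, h2]
    rw [h0, abel_mul d Ee W, sum_w_eq w]
    congr 1
    refine Finset.sum_congr rfl fun i hi => ?_
    simp only [Finset.mem_range] at hi
    rw [finIfSum_eq w (i + 1) (by omega)]
  rw [key p, key q, htot]
  apply sub_le_sub_left
  refine Finset.sum_le_sum fun i hi => ?_
  simp only [Finset.mem_range] at hi
  have hc : 0 ≤ Ee (i + 1) - Ee i := by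
    simp only [sub_nonneg, hEe]
    exact hE (Fin.mk_le_mk.mpr (by omega))
  exact mul_le_mul_of_nonneg_left (hpartial (i + 1) (by omega) (by omega)) hc

private lemma sum_ite_one {d : ℕ} (m : ℕ) (hmd : m ≤ d) :
    ∑ k : Fin d, (if (k : ℕ) < m then (1 : ℝ) else 0) = m := by
  rw [finIfSum_eq (fun _ => (1 : ℝ)) m hmd]
  have h1 : ∀ j ∈ range m, (if h : j < d then (1 : ℝ) else 0) = 1 := fun j hj =>
    dif_pos (by simp only [Finset.mem_range] at hj; omega)
  rw [Finset.sum_congr rfl h1]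
  simp

private lemma lp_bound {d : ℕ} (y : Fin d → ℝ) (hy : Antitone y) (t : Fin d → ℝ)
    (ht0 : ∀ k, 0 ≤ t k) (ht1 : ∀ k, t k ≤ 1) (m : ℕ) (hm : 0 < m) (hmd : m ≤ d)
    (htsum : ∑ k, t k = (m : ℝ)) :
    ∑ k, t k * y k ≤ ∑ k : Fin d, if (k : ℕ) < m then y k else 0 := by
  set θ := y ⟨m - 1, by omega⟩ with hθ
  have key : ∑ k, t k * y k - (∑ k : Fin d, if (k : ℕ) < m then y k else 0)
      = ∑ k, (t k - if (k : ℕ) < m then 1 else 0) * (y k - θ) := by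
    have expand : ∀ k : Fin d, (t k - if (k : ℕ) < m then 1 else 0) * (y k - θ)
        = t k * y k - (if (k : ℕ) < m then y k else 0) - θ * t k
            + θ * (if (k : ℕ) < m then 1 else 0) := by
      intro k; by_cases h : (k : ℕ) < m <;> simp only [h, if_pos, if_neg, if_true, if_false] <;> ring
    simp_rw [expand]
    rw [Finset.sum_add_distrib, Finset.sum_sub_distrib, Finset.sum_sub_distrib,
      ← Finset.mul_sum, ← Finset.mul_sum, htsum, sum_ite_one m hmd]
    ring
  have hterm : ∀ k : Fin d, (t k - if (k : ℕ) < m then 1 else 0) * (y k - θ) ≤ 0 := by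
    intro k
    by_cases h : (k : ℕ) < m
    · have h1 : θ ≤ y k := hy (show k ≤ ⟨m - 1, by omega⟩ by
        rw [Fin.le_def]; simp; omega)
      simp only [h, if_pos]
      apply mul_nonpos_of_nonpos_of_nonneg
      · linarith [ht1 k]
      · linarith
    · have h1 : y k ≤ θ := hy (show (⟨m - 1, by omega⟩ : Fin d) ≤ k by
        rw [Fin.le_def]; simp; omega)
      simp only [h, if_neg, if_false, sub_zero]
      apply mul_nonpos_of_nonneg_of_nonpos (ht0 k)
      linarith
  have h2 : ∑ k, (t k - if (k : ℕ) < m then 1 else 0) * (y k - θ) ≤ 0 :=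
    Finset.sum_nonpos fun k _ => hterm k
  linarith [key]

/-- Rearrangement lower bound: for a doubly stochastic `B` and increasing `E`,
`∑ E_j B_{jk} μ_k ≥ ∑ E_i μ↓_i`. -/
private lemma dsLower {d : ℕ} (hd : 0 < d) (E : Fin d → ℝ) (hE : Monotone E)
    (B : Matrix (Fin d) (Fin d) ℝ) (hB0 : ∀ i j, 0 ≤ B i j) (hBr : ∀ i, ∑ j, B i j = 1)
    (hBc : ∀ j, ∑ i, B i j = 1) (μ : Fin d → ℝ) :
    ∑ i, E i * descSort μ i ≤ ∑ j, ∑ k, E j * (B j k * μ k) := by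
  set σ := Fin.revPerm.trans (Tuple.sort μ) with hσ
  set y := descSort μ with hy'
  have hy : Antitone y := descSort_antitone μ
  set z : Fin d → ℝ := fun j => ∑ k, B j (σ k) * y k with hz
  have hrw : ∀ j, ∑ k, B j k * μ k = z j := fun j =>
    (Equiv.sum_comp σ (fun k => B j k * μ k)).symm
  have hzsum : ∑ j, z j = ∑ k, y k := by
    simp only [hz]
    rw [Finset.sum_comm]
    refine Finset.sum_congr rfl fun k _ => ?_
    rw [← Finset.sum_mul]
    have h : ∑ i, B i (σ k) = 1 := hBc (σ k)
    rw [h, one_mul]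
  have hpartial : ∀ m, 0 < m → m < d →
      (∑ i : Fin d, if (i : ℕ) < m then z i else 0) ≤
        ∑ i : Fin d, if (i : ℕ) < m then y i else 0 := by
    intro m hm hmd
    set t : Fin d → ℝ := fun k => ∑ i : Fin d, (if (i : ℕ) < m then B i (σ k) else 0) with ht'
    have h1 : (∑ i : Fin d, if (i : ℕ) < m then z i else 0) = ∑ k, t k * y k := by
      have e1 : ∀ i : Fin d, (if (i : ℕ) < m then z i else 0)
          = ∑ k, (if (i : ℕ) < m then B i (σ k) else 0) * y k := by
        intro i; by_cases h : (i : ℕ) < m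
        · simp only [h, if_pos, hz]
        · simp [h]
      simp_rw [e1]
      rw [Finset.sum_comm]
      exact Finset.sum_congr rfl fun k _ => (Finset.sum_mul _ _ _).symm
    have ht0 : ∀ k, 0 ≤ t k := fun k => Finset.sum_nonneg fun i _ => by
      by_cases h : (i : ℕ) < m
      · simp only [h, if_pos]; exact hB0 i (σ k)
      · simp [h]
    have ht1 : ∀ k, t k ≤ 1 := by
      intro k
      calc t k ≤ ∑ i, B i (σ k) := Finset.sum_le_sum fun i _ => by
            by_cases h : (i : ℕ) < m
            · simp [h]
            · simp only [h, if_neg, if_false]; exact hB0 i (σ k)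
        _ = 1 := hBc (σ k)
    have htsum : ∑ k, t k = (m : ℝ) := by
      simp only [ht']
      rw [Finset.sum_comm]
      have e2 : ∀ i : Fin d, (∑ k, if (i : ℕ) < m then B i (σ k) else 0)
          = if (i : ℕ) < m then (1 : ℝ) else 0 := by
        intro i; by_cases h : (i : ℕ) < m
        · simp only [h, if_pos]
          rw [Equiv.sum_comp σ (fun k => B i k)]
          exact hBr i
        · simp [h]
      simp_rw [e2]
      exact sum_ite_one m (le_of_lt hmd)
    rw [h1]
    exact lp_bound y hy t ht0 ht1 m hm (le_of_lt hmd) htsum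
  calc ∑ i, E i * descSort μ i = ∑ i, E i * y i := rfl
    _ ≤ ∑ i, E i * z i := abel_compare hd E hE z y hpartial hzsum
    _ = ∑ j, ∑ k, E j * (B j k * μ k) := by
        refine Finset.sum_congr rfl fun j _ => ?_
        rw [show z j = ∑ k, B j k * μ k from (hrw j).symm, Finset.mul_sum]

private lemma trace_diag_formula {d : ℕ} (Eℂ μℂ : Fin d → ℂ) (V : Matrix (Fin d) (Fin d) ℂ) :
    (Matrix.diagonal Eℂ * (V * Matrix.diagonal μℂ * Vᴴ)).trace
      = ∑ j, ∑ k, Eℂ j * (μℂ k * (V j k * star (V j k))) := by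
  have hentry : ∀ j, (Matrix.diagonal Eℂ * (V * Matrix.diagonal μℂ * Vᴴ)) j j
      = Eℂ j * ∑ k, (V j k * μℂ k) * star (V j k) := by
    intro j
    rw [Matrix.diagonal_mul, Matrix.mul_apply]
    congr 1
    refine Finset.sum_congr rfl fun k _ => ?_
    rw [Matrix.mul_diagonal, Matrix.conjTranspose_apply]
  simp only [Matrix.trace, Matrix.diag]
  rw [Finset.sum_congr rfl fun j _ => hentry j]
  refine Finset.sum_congr rfl fun j _ => ?_
  rw [Finset.mul_sum]
  exact Finset.sum_congr rfl fun k _ => by ring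

private lemma row_sum_normSq {d : ℕ} {V : Matrix (Fin d) (Fin d) ℂ} (hV : V * Vᴴ = 1) (j : Fin d) :
    ∑ k, Complex.normSq (V j k) = 1 := by
  have h := congrArg (fun A => A j j) hV
  simp only [Matrix.mul_apply, Matrix.conjTranspose_apply, Matrix.one_apply_eq] at h
  have h2 : ∑ k, (V j k * star (V j k)) = 1 := h
  have h3 : ((∑ k, Complex.normSq (V j k) : ℝ) : ℂ) = 1 := by
    push_cast
    rw [← h2]
    exact Finset.sum_congr rfl fun k _ => (Complex.mul_conj (V j k)).symm
  exact_mod_cast h3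

private lemma col_sum_normSq {d : ℕ} {V : Matrix (Fin d) (Fin d) ℂ} (hV : Vᴴ * V = 1) (k : Fin d) :
    ∑ j, Complex.normSq (V j k) = 1 := by
  have h := congrArg (fun A => A k k) hV
  simp only [Matrix.mul_apply, Matrix.conjTranspose_apply, Matrix.one_apply_eq] at h
  have h2 : ∑ j, (star (V j k) * V j k) = 1 := h
  have h3 : ((∑ j, Complex.normSq (V j k) : ℝ) : ℂ) = 1 := by
    push_cast
    rw [← h2]
    exact Finset.sum_congr rfl fun j _ => by
      rw [mul_comm]
      exact (Complex.mul_conj (V j k)).symm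
  exact_mod_cast h3

end Aux

/-- Schur concavity of passive energy: if the Hamiltonian has
strictly increasing eigenvalues and `λ(ρ₂) ≺ λ(ρ₁)`, then
`Epass(ρ₁) ≤ Epass(ρ₂)`. -/
theorem Epass_antitone_of_majorized {d : ℕ} (H : Matrix (Fin d) (Fin d) ℂ)
    (E : Fin d → ℝ) (hE : StrictMono E)
    (v : Fin d → (Fin d → ℂ)) (hv : IsONB v)
    (hH : H = ∑ j, (E j : ℂ) • projVec (v j))
    (ρ₁ ρ₂ : Matrix (Fin d) (Fin d) ℂ)
    (hρ₁ : ρ₁.PosSemidef) (hρ₁tr : ρ₁.trace = 1)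
    (hρ₂ : ρ₂.PosSemidef) (hρ₂tr : ρ₂.trace = 1)
    (hmaj : Majorized hρ₂.1.eigenvalues hρ₁.1.eigenvalues) :
    Epass H ρ₁ ≤ Epass H ρ₂ := by
  classical
  -- d > 0
  rcases Nat.eq_zero_or_pos d with hd0 | hd
  · exfalso
    subst hd0
    simp [Matrix.trace] at hρ₁tr
  have hE' : Monotone E := hE.monotone
  -- The matrix whose rows are the (conjugated) basis vectors
  set M : Matrix (Fin d) (Fin d) ℂ := Matrix.of fun j k => star (v j k) with hM
  have hMMH : M * Mᴴ = 1 := by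
    ext i j
    have h := hv i j
    simp only [dotProduct, Pi.star_apply] at h
    simp only [Matrix.mul_apply, Matrix.conjTranspose_apply, hM, Matrix.of_apply,
      Matrix.one_apply, star_star]
    rw [← h]
  have hMmem : M ∈ Matrix.unitaryGroup (Fin d) ℂ :=
    Matrix.mem_unitaryGroup_iff.mpr (by simpa [Matrix.star_eq_conjTranspose] using hMMH)
  have hMHM : Mᴴ * M = 1 := by
    have := Matrix.mem_unitaryGroup_iff'.mp hMmem
    simpa [Matrix.star_eq_conjTranspose] using this
  have hH' : H = Mᴴ * Matrix.diagonal (fun j => (E j : ℂ)) * M := by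
    have hR : ∀ a b, (Mᴴ * Matrix.diagonal (fun j => (E j : ℂ)) * M) a b
        = ∑ j, (E j : ℂ) * (v j a * star (v j b)) := by
      intro a b
      rw [Matrix.mul_apply]
      refine Finset.sum_congr rfl fun j _ => ?_
      rw [Matrix.mul_diagonal, Matrix.conjTranspose_apply]
      simp only [hM, Matrix.of_apply, star_star]
      ring
    rw [hH]
    ext a b
    rw [hR]
    simp only [Matrix.sum_apply, Matrix.smul_apply, projVec, Matrix.vecMulVec_apply,
      Pi.star_apply, smul_eq_mul]
  -- Generic trace formula
  have key : ∀ (ρ : Matrix (Fin d) (Fin d) ℂ) (hρ : ρ.PosSemidef)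
      (U : Matrix.unitaryGroup (Fin d) ℂ),
      ((H * ((U : Matrix (Fin d) (Fin d) ℂ) * ρ * ((U : Matrix (Fin d) (Fin d) ℂ))ᴴ)).trace).re
        = ∑ j, ∑ k, E j *
            (Complex.normSq ((M * (U : Matrix (Fin d) (Fin d) ℂ)
              * (hρ.1.eigenvectorUnitary : Matrix (Fin d) (Fin d) ℂ)) j k)
              * hρ.1.eigenvalues k) := by
    intro ρ hρ U
    set W : Matrix (Fin d) (Fin d) ℂ := (hρ.1.eigenvectorUnitary : Matrix (Fin d) (Fin d) ℂ) with hW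
    set μ : Fin d → ℝ := hρ.1.eigenvalues with hμ
    set Uu : Matrix (Fin d) (Fin d) ℂ := (U : Matrix (Fin d) (Fin d) ℂ) with hUu
    set V : Matrix (Fin d) (Fin d) ℂ := M * Uu * W with hV
    have hspec : ρ = W * Matrix.diagonal (fun k => (μ k : ℂ)) * Wᴴ := by
      have := hρ.1.spectral_theorem
      simpa [hW, hμ, Function.comp_def, Matrix.star_eq_conjTranspose] using this
    have hmatrix : H * (Uu * ρ * Uuᴴ)
        = Mᴴ * (Matrix.diagonal (fun j => (E j : ℂ))
            * (V * Matrix.diagonal (fun k => (μ k : ℂ)) * Vᴴ) * M) := by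
      rw [hH', hspec, hV]
      simp only [Matrix.conjTranspose_mul, Matrix.mul_assoc]
      rw [hMHM]
      simp [Matrix.mul_assoc]
    have htr : (H * (Uu * ρ * Uuᴴ)).trace
        = (Matrix.diagonal (fun j => (E j : ℂ))
            * (V * Matrix.diagonal (fun k => (μ k : ℂ)) * Vᴴ)).trace := by
      rw [hmatrix, Matrix.trace_mul_comm]
      simp only [Matrix.mul_assoc]
      rw [hMMH, Matrix.mul_one]
    rw [htr, trace_diag_formula]
    have hterm : ∀ j k, (E j : ℂ) * ((μ k : ℂ) * (V j k * star (V j k)))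
        = ((E j * (Complex.normSq (V j k) * μ k) : ℝ) : ℂ) := by
      intro j k
      rw [show star (V j k) = (starRingEnd ℂ) (V j k) from rfl, Complex.mul_conj (V j k)]
      push_cast
      ring
    rw [Finset.sum_congr rfl fun j _ => Finset.sum_congr rfl fun k _ => hterm j k]
    simp only [Complex.re_sum, Complex.ofReal_re]
  -- notation
  set μ₁ : Fin d → ℝ := hρ₁.1.eigenvalues with hμ₁
  set μ₂ : Fin d → ℝ := hρ₂.1.eigenvalues with hμ₂
  set L₁ : ℝ := ∑ i, E i * descSort μ₁ i with hL₁
  set L₂ : ℝ := ∑ i, E i * descSort μ₂ i with hL₂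
  -- lower bound for every unitary
  have lower : ∀ (ρ : Matrix (Fin d) (Fin d) ℂ) (hρ : ρ.PosSemidef)
      (U : Matrix.unitaryGroup (Fin d) ℂ),
      ∑ i, E i * descSort hρ.1.eigenvalues i ≤
        ((H * ((U : Matrix (Fin d) (Fin d) ℂ) * ρ
          * ((U : Matrix (Fin d) (Fin d) ℂ))ᴴ)).trace).re := by
    intro ρ hρ U
    rw [key ρ hρ U]
    set V : Matrix (Fin d) (Fin d) ℂ := M * (U : Matrix (Fin d) (Fin d) ℂ)
      * (hρ.1.eigenvectorUnitary : Matrix (Fin d) (Fin d) ℂ) with hV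
    have hVmem : V ∈ Matrix.unitaryGroup (Fin d) ℂ :=
      mul_mem (mul_mem hMmem U.2) (hρ.1.eigenvectorUnitary).2
    have hVV : V * Vᴴ = 1 := by
      simpa [Matrix.star_eq_conjTranspose] using Matrix.mem_unitaryGroup_iff.mp hVmem
    have hVHV : Vᴴ * V = 1 := by
      simpa [Matrix.star_eq_conjTranspose] using Matrix.mem_unitaryGroup_iff'.mp hVmem
    exact dsLower hd E hE' (Matrix.of fun j k => Complex.normSq (V j k))
      (fun i j => Complex.normSq_nonneg _)
      (fun i => row_sum_normSq hVV i) (fun j => col_sum_normSq hVHV j)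
      hρ.1.eigenvalues
  haveI : Nonempty (Matrix.unitaryGroup (Fin d) ℂ) := ⟨1⟩
  have hbdd : BddBelow (Set.range fun U : Matrix.unitaryGroup (Fin d) ℂ =>
      ((H * ((U : Matrix (Fin d) (Fin d) ℂ) * ρ₁
        * ((U : Matrix (Fin d) (Fin d) ℂ))ᴴ)).trace).re) := by
    refine ⟨L₁, ?_⟩
    rintro x ⟨U, rfl⟩
    exact lower ρ₁ hρ₁ U
  -- the optimal permutation unitary for ρ₁
  set W₁ : Matrix (Fin d) (Fin d) ℂ := (hρ₁.1.eigenvectorUnitary : Matrix (Fin d) (Fin d) ℂ)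
    with hW₁
  have hW₁mem : W₁ ∈ Matrix.unitaryGroup (Fin d) ℂ := (hρ₁.1.eigenvectorUnitary).2
  have hW₁HW₁ : W₁ᴴ * W₁ = 1 := by
    simpa [Matrix.star_eq_conjTranspose] using Matrix.mem_unitaryGroup_iff'.mp hW₁mem
  set p : Fin d → Fin d := fun j => Tuple.sort μ₁ j.rev with hp
  have hpinj : Function.Injective p := by
    intro a b hab
    have h : (Fin.revPerm.trans (Tuple.sort μ₁)) a = (Fin.revPerm.trans (Tuple.sort μ₁)) b := hab
    exact (Equiv.injective _) h
  set P : Matrix (Fin d) (Fin d) ℂ := Matrix.of fun j k => if p j = k then 1 else 0 with hP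
  have hPPH : P * Pᴴ = 1 := by
    ext i j
    simp only [Matrix.mul_apply, Matrix.conjTranspose_apply, hP, Matrix.of_apply,
      Matrix.one_apply, apply_ite (star : ℂ → ℂ), star_one, star_zero, ite_mul, mul_ite,
      one_mul, mul_one, mul_zero, zero_mul]
    rw [Finset.sum_ite_eq Finset.univ (p j) (fun k => if p i = k then (1 : ℂ) else 0)]
    simp only [Finset.mem_univ, if_true, hpinj.eq_iff]
  have hPmem : P ∈ Matrix.unitaryGroup (Fin d) ℂ :=
    Matrix.mem_unitaryGroup_iff.mpr (by simpa [Matrix.star_eq_conjTranspose] using hPPH)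
  set U₀ : Matrix (Fin d) (Fin d) ℂ := Mᴴ * P * W₁ᴴ with hU₀
  have hU₀mem : U₀ ∈ Matrix.unitaryGroup (Fin d) ℂ := by
    apply mul_mem (mul_mem ?_ hPmem) ?_
    · simpa [Matrix.star_eq_conjTranspose] using Unitary.star_mem hMmem
    · simpa [Matrix.star_eq_conjTranspose] using Unitary.star_mem hW₁mem
  have hMUW : M * U₀ * W₁ = P := by
    rw [hU₀]
    simp only [Matrix.mul_assoc]
    rw [hW₁HW₁, Matrix.mul_one, ← Matrix.mul_assoc, hMMH, Matrix.one_mul]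
  have hfU₀ : ((H * ((U₀ : Matrix (Fin d) (Fin d) ℂ) * ρ₁ * U₀ᴴ)).trace).re = L₁ := by
    have hk := key ρ₁ hρ₁ ⟨U₀, hU₀mem⟩
    rw [show ((⟨U₀, hU₀mem⟩ : Matrix.unitaryGroup (Fin d) ℂ) : Matrix (Fin d) (Fin d) ℂ)
      = U₀ from rfl] at hk
    rw [hk]
    have h2 : M * U₀ * (hρ₁.1.eigenvectorUnitary : Matrix (Fin d) (Fin d) ℂ) = P := hMUW
    rw [h2, hL₁]
    refine Finset.sum_congr rfl fun j _ => ?_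
    have h3 : ∀ k, Complex.normSq (P j k) = if p j = k then 1 else 0 := by
      intro k
      by_cases h : p j = k <;> simp [hP, h]
    simp only [h3, ite_mul, mul_ite, one_mul, zero_mul, mul_zero, mul_one]
    rw [Finset.sum_ite_eq Finset.univ (p j) (fun k => E j * hρ₁.1.eigenvalues k)]
    simp only [Finset.mem_univ, if_true]
    rfl
  -- chain of inequalities
  have h₁ : Epass H ρ₁ ≤ L₁ := by
    have hc := ciInf_le hbdd (⟨U₀, hU₀mem⟩ : Matrix.unitaryGroup (Fin d) ℂ)
    rw [show Epass H ρ₁ = ⨅ U : Matrix.unitaryGroup (Fin d) ℂ,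
      ((H * ((U : Matrix (Fin d) (Fin d) ℂ) * ρ₁
        * ((U : Matrix (Fin d) (Fin d) ℂ))ᴴ)).trace).re from rfl]
    refine le_trans hc ?_
    rw [← hfU₀]
  have hcmp : L₁ ≤ L₂ := by
    rw [hL₁, hL₂]
    refine abel_compare hd E hE' (descSort μ₂) (descSort μ₁) ?_ ?_
    · intro m _ _
      exact hmaj.1 m
    · rw [sum_descSort, sum_descSort]
      exact hmaj.2
  have h₂ : L₂ ≤ Epass H ρ₂ := le_ciInf fun U => lower ρ₂ hρ₂ U
  exact le_trans h₁ (le_trans hcmp h₂)
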